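/- Let ρ be a positive real number with ρ ≠ 1 and set β = (ρ+1)/(2(ρ−1)). Define the 2×2 matrices over A: CFK₀ = [[−2K, ((ρ+1)/ρ)·S], [−(1+ρ)·N, 2K']], CFK₀ᵗ = [[2K, −((ρ+1)/ρ)·S], [(1+ρ)·N, −2K']], R₀ = (1/(ρ+1))·[[1, 2S], [−2ρ·N, ρ·1]], and R₀ᵗ = (1/(ρ+1))·[[ρ·1, −2S], [2ρ·N, 1]]. Then R₀ᵗ · R₀ = (4ρ/(ρ+1)²) · diag(K², K'²), and consequently CFK₀ᵗ · R₀ᵗ · R₀ · CFK₀ = (4(ρ−1)²/(ρ+1)²) · diag(K²·(K − β·1)(K + β·1), K'²·(K' − β·1)(K' + β·1)). -/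
import Mathlib

set_option maxHeartbeats 1000000


theorem R0t_R0_and_CFK0t_R0t_R0_CFK0 (A : Type*) [Ring A] [Algebra ℝ A]
    (S N K K' : A)
    (hSN : S * N = -(1/4 : ℝ) • (1 : A) + K ^ 2)
    (hNS : N * S = -(1/4 : ℝ) • (1 : A) + K' ^ 2)
    (hNK : N * K = K' * N)
    (hKS : K * S = S * K')
    (ρ : ℝ) (hρ : 0 < ρ) (hρ1 : ρ ≠ 1)
    (β : ℝ) (hβ : β = (ρ + 1) / (2 * (ρ - 1)))
    (CFK₀ CFK₀t R₀ R₀t : Matrix (Fin 2) (Fin 2) A)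
    (hCFK₀ : CFK₀ = !![-(2 : ℝ) • K, ((ρ + 1)/ρ) • S; -(1 + ρ) • N, (2 : ℝ) • K'])
    (hCFK₀t : CFK₀t = !![(2 : ℝ) • K, -((ρ + 1)/ρ) • S; (1 + ρ) • N, -(2 : ℝ) • K'])
    (hR₀ : R₀ = (1/(ρ + 1)) • !![(1 : A), (2 : ℝ) • S; -(2*ρ) • N, ρ • (1 : A)])
    (hR₀t : R₀t = (1/(ρ + 1)) • !![ρ • (1 : A), -(2 : ℝ) • S; (2*ρ) • N, (1 : A)]) :
    R₀t * R₀ = (4*ρ/(ρ + 1)^2) • !![K ^ 2, 0; 0, K' ^ 2] ∧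
    CFK₀t * R₀t * R₀ * CFK₀ =
      (4*(ρ - 1)^2/(ρ + 1)^2) •
        !![K ^ 2 * ((K - β • (1 : A)) * (K + β • (1 : A))), 0;
           0, K' ^ 2 * ((K' - β • (1 : A)) * (K' + β • (1 : A)))] := by
  have hρ0 : ρ ≠ 0 := ne_of_gt hρ
  have hρ1' : ρ + 1 ≠ 0 := by positivity
  have hρm : ρ - 1 ≠ 0 := sub_ne_zero.mpr hρ1
  have h2 : 2 * ρ - 2 ≠ 0 := by intro h; apply hρm; linarith
  have hD : (4 : ℝ) - ρ ^ 2 * 8 + ρ ^ 4 * 4 ≠ 0 := by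
    have h4 : (4 : ℝ) - ρ ^ 2 * 8 + ρ ^ 4 * 4 = 4 * ((ρ - 1) * (ρ + 1)) ^ 2 := by ring
    rw [h4]
    exact mul_ne_zero (by norm_num) (pow_ne_zero _ (mul_ne_zero hρm hρ1'))
  have e1 : S * K' ^ 2 = K ^ 2 * S := by
    rw [pow_two, pow_two, ← mul_assoc, ← hKS, mul_assoc, ← hKS, mul_assoc]
  have e2 : N * K ^ 2 = K' ^ 2 * N := by
    rw [pow_two, pow_two, ← mul_assoc, hNK, mul_assoc, hNK, ← mul_assoc]
  have hc : K ^ 2 * K = K * K ^ 2 := by noncomm_ring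
  have hc' : K' ^ 2 * K' = K' * K' ^ 2 := by noncomm_ring
  have f1 : S * K' ^ 2 * K' = K * K ^ 2 * S := by
    rw [e1, mul_assoc, ← hKS, ← mul_assoc, hc]
  have f2 : N * K ^ 2 * K = K' * K' ^ 2 * N := by
    rw [e2, mul_assoc, hNK, ← mul_assoc, hc']
  have f3 : N * K ^ 2 * S = K' ^ 2 * (N * S) := by rw [e2, mul_assoc]
  have f4 : S * K' ^ 2 * N = K ^ 2 * (S * N) := by rw [e1, mul_assoc]
  have g2 : K' ^ 2 * (K' * K') = K' ^ 2 * K' ^ 2 := by noncomm_ring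
  have g3 : K' * K' ^ 2 * K' = K' ^ 2 * K' ^ 2 := by noncomm_ring
  have g4 : K * K ^ 2 * K = K ^ 2 * K ^ 2 := by noncomm_ring
  have g5 : K ^ 2 * (K * K) = K ^ 2 * K ^ 2 := by noncomm_ring
  have h1 : R₀t * R₀ = (4*ρ/(ρ + 1)^2) • !![K ^ 2, 0; 0, K' ^ 2] := by
    subst hR₀ hR₀t
    ext i j
    fin_cases i <;> fin_cases j <;>
      simp [Matrix.mul_apply, Fin.sum_univ_two, mul_smul_comm, smul_mul_assoc, smul_smul,
        hSN, hNS, smul_add] <;>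
      (match_scalars <;> field_simp <;> ring)
  refine ⟨h1, ?_⟩
  rw [mul_assoc CFK₀t, h1]
  subst hCFK₀ hCFK₀t hβ
  ext i j
  fin_cases i <;> fin_cases j <;>
    simp [Matrix.mul_apply, Fin.sum_univ_two, mul_smul_comm, smul_mul_assoc, smul_smul,
      smul_add, mul_add, add_mul, sub_mul, mul_sub, smul_sub,
      f1, f2, f3, f4, hSN, hNS, mul_one, g2, g3, g4, g5] <;>
    (match_scalars <;> field_simp <;> ring)
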